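/- Let α ≥ −1/2 and α ≥ β > −1, and let n ≥ 1 be a fixed integer. Then for every t ∈ [t_{n,n}, 1) and every k ∈ {1, …, n} one has the strict inequality P_k^{(α,β)}(t)/P_k^{(α,β)}(1) < P_{k−1}^{(α,β)}(t)/P_{k−1}^{(α,β)}(1). -/

import Mathlib

open MeasureTheory Real Filter

/-- Jacobi polynomials defined by the three-term recurrence. -/
noncomputable def jacobiP (α β : ℝ) : ℕ → ℝ → ℝ
  | 0 => fun _ => 1
  | 1 => fun t => ((α + β + 2) * t + (α - β)) / 2
  | (n + 2) => fun t =>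
      let m : ℝ := (n : ℝ) + 1
      let a := (2 * m + α + β) * (2 * m + α + β + 1) * (2 * m + α + β + 2)
      let b := (2 * m + α + β + 1) * (α ^ 2 - β ^ 2)
      let c := (m + α) * (m + β) * (2 * m + α + β + 2)
      let d := 2 * (m + 1) * (m + α + β + 1) * (2 * m + α + β)
      ((a / d) * t + b / d) * jacobiP α β (n + 1) t - (c / d) * jacobiP α β n t

/-- The incomplete beta function. -/
noncomputable def incBeta (a b x : ℝ) : ℝ :=
  ∫ s in (0:ℝ)..x, s ^ (a - 1) * (1 - s) ^ (b - 1)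

/-- The Bessel function of the first kind. -/
noncomputable def besselJ (α x : ℝ) : ℝ :=
  ∑' m : ℕ, ((-1 : ℝ) ^ m / (m.factorial * Real.Gamma (m + α + 1))) * (x / 2) ^ (2 * (m:ℝ) + α)

namespace JacobiAux

set_option linter.unusedSectionVars false

noncomputable def aJ (α β m : ℝ) : ℝ := (2*m+α+β) * (2*m+α+β+1) * (2*m+α+β+2)
noncomputable def bJ (α β m : ℝ) : ℝ := (2*m+α+β+1) * (α^2 - β^2)
noncomputable def cJ (α β m : ℝ) : ℝ := (m+α) * (m+β) * (2*m+α+β+2)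
noncomputable def dJ (α β m : ℝ) : ℝ := 2*(m+1) * (m+α+β+1) * (2*m+α+β)

lemma jacobi_rec (α β : ℝ) (k : ℕ) (x : ℝ) :
    jacobiP α β (k + 2) x =
      ((aJ α β ((k:ℝ)+1) / dJ α β ((k:ℝ)+1)) * x + bJ α β ((k:ℝ)+1) / dJ α β ((k:ℝ)+1)) *
          jacobiP α β (k + 1) x
        - (cJ α β ((k:ℝ)+1) / dJ α β ((k:ℝ)+1)) * jacobiP α β k x := rfl

lemma jacobi_zero (α β x : ℝ) : jacobiP α β 0 x = 1 := rfl

lemma jacobi_one (α β x : ℝ) : jacobiP α β 1 x = ((α + β + 2) * x + (α - β)) / 2 := rfl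

lemma continuous_jacobi (α β : ℝ) : ∀ k : ℕ, Continuous (jacobiP α β k) := by
  intro k
  induction k using Nat.strong_induction_on with
  | _ k ih =>
    match k with
    | 0 => exact continuous_const
    | 1 =>
      show Continuous fun t => ((α + β + 2) * t + (α - β)) / 2
      fun_prop
    | (k+2) =>
      have h1 := ih (k+1) (by omega)
      have h0 := ih k (by omega)
      have heq : jacobiP α β (k+2) = fun x =>
          ((aJ α β ((k:ℝ)+1) / dJ α β ((k:ℝ)+1)) * x + bJ α β ((k:ℝ)+1) / dJ α β ((k:ℝ)+1)) *
            jacobiP α β (k + 1) x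
          - (cJ α β ((k:ℝ)+1) / dJ α β ((k:ℝ)+1)) * jacobiP α β k x := by
        funext x; exact jacobi_rec α β k x
      rw [heq]
      fun_prop

section Pos

variable {α β : ℝ} (hα : -1/2 ≤ α) (hβα : β ≤ α) (hβ : -1 < β)
include hα hβα hβ

lemma aJ_pos {m : ℝ} (hm : 1 ≤ m) : 0 < aJ α β m := by
  have h1 : 0 < 2*m+α+β := by nlinarith
  have h2 : 0 < 2*m+α+β+1 := by nlinarith
  have h3 : 0 < 2*m+α+β+2 := by nlinarith
  exact mul_pos (mul_pos h1 h2) h3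

lemma cJ_pos {m : ℝ} (hm : 1 ≤ m) : 0 < cJ α β m := by
  have h1 : 0 < m+α := by nlinarith
  have h2 : 0 < m+β := by nlinarith
  have h3 : 0 < 2*m+α+β+2 := by nlinarith
  exact mul_pos (mul_pos h1 h2) h3

lemma dJ_pos {m : ℝ} (hm : 1 ≤ m) : 0 < dJ α β m := by
  have h1 : (0:ℝ) < 2*(m+1) := by nlinarith
  have h2 : 0 < m+α+β+1 := by nlinarith
  have h3 : 0 < 2*m+α+β := by nlinarith
  exact mul_pos (mul_pos h1 h2) h3

lemma jacobi_rec' (k : ℕ) (x : ℝ) :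
    dJ α β ((k:ℝ)+1) * jacobiP α β (k + 2) x =
      (aJ α β ((k:ℝ)+1) * x + bJ α β ((k:ℝ)+1)) * jacobiP α β (k + 1) x
        - cJ α β ((k:ℝ)+1) * jacobiP α β k x := by
  have hd : dJ α β ((k:ℝ)+1) ≠ 0 := (dJ_pos hα hβα hβ (by simp : (1:ℝ) ≤ (k:ℝ)+1)).ne'
  rw [jacobi_rec]
  field_simp

/-- Eventually (for large s) `1 ≤ P_k(s) ≤ P_{k+1}(s)`. -/
lemma eventual : ∀ k : ℕ, ∃ M : ℝ, ∀ s : ℝ, M ≤ s →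
    1 ≤ jacobiP α β k s ∧ jacobiP α β k s ≤ jacobiP α β (k+1) s := by
  intro k
  induction k with
  | zero =>
    have hd : (0:ℝ) < α + β + 2 := by nlinarith
    refine ⟨(2 - (α - β))/(α+β+2), fun s hs => ?_⟩
    have h1 : (2 - (α-β)) ≤ (α+β+2) * s := by
      have := mul_le_mul_of_nonneg_left hs hd.le
      rw [mul_div_cancel₀ _ hd.ne'] at this
      linarith
    refine ⟨le_of_eq (jacobi_zero α β s).symm, ?_⟩
    rw [jacobi_zero, jacobi_one]
    linarith
  | succ k ih =>
    obtain ⟨M, hM⟩ := ih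
    set m : ℝ := (k:ℝ)+1 with hmdef
    have hm : (1:ℝ) ≤ m := by simp [hmdef]
    have ha := aJ_pos hα hβα hβ hm
    have hc := cJ_pos hα hβα hβ hm
    have hd := dJ_pos hα hβα hβ hm
    refine ⟨max M ((dJ α β m + cJ α β m - bJ α β m)/(aJ α β m)), fun s hs => ?_⟩
    obtain ⟨h1, h2⟩ := hM s (le_trans (le_max_left _ _) hs)
    have hs2 : (dJ α β m + cJ α β m - bJ α β m) ≤ aJ α β m * s := by
      have h := le_trans (le_max_right _ _) hs
      have := mul_le_mul_of_nonneg_left h ha.le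
      rw [mul_div_cancel₀ _ ha.ne'] at this
      linarith
    have h3 : 1 ≤ jacobiP α β (k+1) s := le_trans h1 h2
    have hrec := jacobi_rec' hα hβα hβ k s
    rw [← hmdef] at hrec
    refine ⟨h3, ?_⟩
    have key : dJ α β m * jacobiP α β (k+1) s ≤ dJ α β m * jacobiP α β (k+2) s := by
      rw [hrec]
      have e1 : cJ α β m * jacobiP α β k s ≤ cJ α β m * jacobiP α β (k+1) s :=
        mul_le_mul_of_nonneg_left h2 hc.le
      have e2 : (dJ α β m + cJ α β m) * jacobiP α β (k+1) s
          ≤ (aJ α β m * s + bJ α β m) * jacobiP α β (k+1) s := by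
        apply mul_le_mul_of_nonneg_right _ (by linarith)
        linarith
      nlinarith
    exact le_of_mul_le_mul_left key hd

/-- The chain lemma: for each `k ≥ 1` there is a point `z` which is a zero of `P_k`,
beyond which `P_k` is positive, and at/beyond which all lower-index `P_j` are positive. -/
lemma chain : ∀ k : ℕ, 1 ≤ k → ∃ z : ℝ, jacobiP α β k z = 0 ∧
    (∀ s, z < s → 0 < jacobiP α β k s) ∧
    (∀ j, j < k → ∀ s, z ≤ s → 0 < jacobiP α β j s) := by
  intro k hk
  induction k, hk using Nat.le_induction with
  | base =>
    have hd : (0:ℝ) < α + β + 2 := by nlinarith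
    refine ⟨(β - α)/(α+β+2), ?_, ?_, ?_⟩
    · rw [jacobi_one]
      field_simp
      ring
    · intro s hs
      have h2 := (div_lt_iff₀ hd).mp hs
      rw [jacobi_one]
      nlinarith
    · intro j hj s _
      interval_cases j
      rw [jacobi_zero]; norm_num
  | succ k hk ihk =>
    obtain ⟨j, rfl⟩ : ∃ j, k = j + 1 := ⟨k-1, (Nat.succ_pred_eq_of_pos hk).symm⟩
    obtain ⟨z, hz0, hzpos, hzlow⟩ := ihk
    set m : ℝ := (j:ℝ)+1 with hmdef
    have hm : (1:ℝ) ≤ m := by simp [hmdef]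
    have hc := cJ_pos hα hβα hβ hm
    have hd := dJ_pos hα hβα hβ hm
    -- the value of P_{j+2} at z is negative
    have hneg : jacobiP α β (j+2) z < 0 := by
      have hrec := jacobi_rec' hα hβα hβ j z
      rw [← hmdef, hz0] at hrec
      have hlow : 0 < jacobiP α β j z := hzlow j (by omega) z le_rfl
      nlinarith
    -- eventual positivity of P_{j+2}
    obtain ⟨M, hM⟩ := eventual hα hβα hβ (j+1)
    have hMpos : ∀ s, M ≤ s → 1 ≤ jacobiP α β (j+2) s := fun s hs =>
      le_trans (hM s hs).1 (hM s hs).2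
    have hcont : Continuous (jacobiP α β (j+2)) := continuous_jacobi α β (j+2)
    -- the zero set of P_{j+2} in [z, ∞)
    set Z : Set ℝ := {s | z ≤ s} ∩ (jacobiP α β (j+2)) ⁻¹' {0} with hZdef
    have hZclosed : IsClosed Z :=
      (isClosed_le continuous_const continuous_id).inter
        ((isClosed_singleton).preimage hcont)
    have hZne : Z.Nonempty := by
      have hzM : z ≤ max z M := le_max_left _ _
      have h0mem : (0:ℝ) ∈ Set.Icc (jacobiP α β (j+2) z) (jacobiP α β (j+2) (max z M)) := by
        refine ⟨hneg.le, ?_⟩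
        have := hMpos (max z M) (le_max_right _ _); linarith
      obtain ⟨w, hw, hfw⟩ := intermediate_value_Icc hzM hcont.continuousOn h0mem
      exact ⟨w, hw.1, hfw⟩
    have hZbdd : BddAbove Z := by
      refine ⟨M, fun s hs => ?_⟩
      by_contra hcon
      push_neg at hcon
      have h1 := hMpos s hcon.le
      have h2 : jacobiP α β (j+2) s = 0 := hs.2
      linarith
    set z' := sSup Z with hz'def
    have hz'mem : z' ∈ Z := hZclosed.csSup_mem hZne hZbdd
    have hz'zero : jacobiP α β (j+2) z' = 0 := hz'mem.2
    have hz'ge : z ≤ z' := hz'mem.1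
    have hz'gt : z < z' := lt_of_le_of_ne hz'ge (by
      intro h; rw [← h] at hz'zero; linarith)
    refine ⟨z', hz'zero, ?_, ?_⟩
    · -- positivity of P_{j+2} beyond z'
      intro s hs
      by_contra hcon
      push_neg at hcon
      have hsM : s ≤ max s M := le_max_left _ _
      have h0mem : (0:ℝ) ∈ Set.Icc (jacobiP α β (j+2) s) (jacobiP α β (j+2) (max s M)) := by
        refine ⟨hcon, ?_⟩
        have := hMpos (max s M) (le_max_right _ _); linarith
      obtain ⟨w, hw, hfw⟩ := intermediate_value_Icc hsM hcont.continuousOn h0mem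
      have hwZ : w ∈ Z := ⟨le_trans hz'ge (le_trans hs.le hw.1), hfw⟩
      have h1 : w ≤ z' := le_csSup hZbdd hwZ
      have h2 : s ≤ z' := le_trans hw.1 h1
      linarith
    · -- lower indices positive at/beyond z'
      intro i hi s hs
      have hzs : z < s := lt_of_lt_of_le hz'gt hs
      rcases Nat.lt_succ_iff_lt_or_eq.mp hi with h | h
      · exact hzlow i h s hzs.le
      · subst h; exact hzpos s hzs

end Pos

end JacobiAux

open JacobiAux in
/-- Ordering of normalized Jacobi polynomials near 1 (Lemma 2.1 / `ordering-PN`):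
for `t ∈ [t_{n,n}, 1)` and `1 ≤ k ≤ n`,
`P_k(t)/P_k(1) < P_{k-1}(t)/P_{k-1}(1)`. -/
theorem jacobi_ordering_strict (α β : ℝ) (hα : -1/2 ≤ α) (hβα : β ≤ α) (hβ : -1 < β)
    (n : ℕ) (hn : 1 ≤ n) (tnn : ℝ)
    (hzero : jacobiP α β n tnn = 0)
    (hmax : ∀ t : ℝ, jacobiP α β n t = 0 → t ≤ tnn)
    (t : ℝ) (ht : tnn ≤ t) (ht1 : t < 1)
    (k : ℕ) (hk1 : 1 ≤ k) (hkn : k ≤ n) :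
    jacobiP α β k t / jacobiP α β k 1 <
      jacobiP α β (k - 1) t / jacobiP α β (k - 1) 1 := by
  -- positivity of the lower-index polynomials on [tnn, ∞)
  obtain ⟨z, hz0, hzpos, hzlow⟩ := chain hα hβα hβ n hn
  have hz_le : z ≤ tnn := hmax z hz0
  have htnn_le : tnn ≤ z := by
    by_contra hcon
    push_neg at hcon
    have := hzpos tnn hcon
    linarith
  have hz_eq : z = tnn := le_antisymm hz_le htnn_le
  have htnn1 : tnn < 1 := lt_of_le_of_lt ht ht1
  have hpos : ∀ j, j < n → ∀ s, tnn ≤ s → 0 < jacobiP α β j s := fun j hj s hs =>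
    hzlow j hj s (hz_eq ▸ hs)
  have hpos1 : ∀ j, j ≤ n → 0 < jacobiP α β j 1 := by
    intro j hj
    rcases eq_or_lt_of_le hj with rfl | h
    · exact hzpos 1 (by rw [hz_eq]; exact htnn1)
    · exact hpos j h 1 htnn1.le
  obtain ⟨j, rfl⟩ : ∃ j, k = j + 1 := ⟨k-1, (Nat.succ_pred_eq_of_pos hk1).symm⟩
  simp only [Nat.add_sub_cancel]
  clear hk1
  induction j with
  | zero =>
    have h1 : jacobiP α β 1 1 = α + 1 := by rw [jacobi_one]; ring
    rw [jacobi_zero, jacobi_zero, jacobi_one, h1]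
    have hd : (0:ℝ) < α+β+2 := by nlinarith
    have ha1 : (0:ℝ) < α+1 := by nlinarith
    rw [div_lt_div_iff₀ ha1 one_pos]
    nlinarith
  | succ j ihj =>
    have IH := ihj (by omega)
    have h1t : 0 < jacobiP α β (j+1) t := hpos (j+1) (by omega) t ht
    have hJ1 : 0 < jacobiP α β (j+1) 1 := hpos1 (j+1) (by omega)
    have hJ0 : 0 < jacobiP α β j 1 := hpos1 j (by omega)
    have hJ2 : 0 < jacobiP α β (j+2) 1 := hpos1 (j+2) (by omega)
    rw [div_lt_div_iff₀ hJ1 hJ0] at IH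
    rw [div_lt_div_iff₀ hJ2 hJ1]
    have hrt := jacobi_rec' hα hβα hβ j t
    have hr1 := jacobi_rec' hα hβα hβ j 1
    have hm : (1:ℝ) ≤ (j:ℝ)+1 := by simp
    have ha := aJ_pos hα hβα hβ hm
    have hc := cJ_pos hα hβα hβ hm
    have hd := dJ_pos hα hβα hβ hm
    have key : dJ α β ((j:ℝ)+1) * (jacobiP α β (j+2) t * jacobiP α β (j+1) 1
        - jacobiP α β (j+1) t * jacobiP α β (j+2) 1)
        = aJ α β ((j:ℝ)+1) * (t - 1) * (jacobiP α β (j+1) t * jacobiP α β (j+1) 1)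
          + cJ α β ((j:ℝ)+1) * (jacobiP α β (j+1) t * jacobiP α β j 1
              - jacobiP α β j t * jacobiP α β (j+1) 1) := by
      linear_combination jacobiP α β (j+1) 1 * hrt - jacobiP α β (j+1) t * hr1
    have hneg : dJ α β ((j:ℝ)+1) * (jacobiP α β (j+2) t * jacobiP α β (j+1) 1
        - jacobiP α β (j+1) t * jacobiP α β (j+2) 1) < 0 := by
      rw [key]
      have t1 : aJ α β ((j:ℝ)+1) * (t - 1) * (jacobiP α β (j+1) t * jacobiP α β (j+1) 1) < 0 := by
        apply mul_neg_of_neg_of_pos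
        · apply mul_neg_of_pos_of_neg ha; linarith
        · exact mul_pos h1t hJ1
      have t2 : cJ α β ((j:ℝ)+1) * (jacobiP α β (j+1) t * jacobiP α β j 1
          - jacobiP α β j t * jacobiP α β (j+1) 1) < 0 :=
        mul_neg_of_pos_of_neg hc (by linarith)
      linarith
    nlinarith [hneg, hd]
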